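/- Let X be an ℝ^d-valued random vector with marginal distribution functions F_1,…,F_d, let u ≤ v (componentwise) in [−∞,∞]^d, and let g, h : ℝ^d → [0,1] be measurable functions with g ≤ h pointwise, 1_{(−∞,u]} ≤ g and h ≤ 1_{(−∞,v]}. Then for every r ∈ [1,∞): ‖ h(X) − g(X) ‖_r ≤ ( Σ_{i=1}^d ( F_i(v_i) − F_i(u_i) ) )^{1/r}, where ‖Y‖_r = (E|Y|^r)^{1/r}. -/

import Mathlib

open MeasureTheory Filter Set

noncomputable section

/-- The indicator function of the generalized rectangle `(-∞, a]`, `a ∈ [-∞,∞]^d`. -/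
def indLE {d : ℕ} (a : Fin d → EReal) : (Fin d → ℝ) → ℝ :=
  Set.indicator {x : Fin d → ℝ | ∀ i, (x i : EReal) ≤ a i} 1

/-- The i-th marginal distribution function of `X`, extended to `[-∞,∞]`. -/
def margCdf {Ω : Type*} [MeasurableSpace Ω] {d : ℕ} (P : Measure Ω)
    (X : Ω → (Fin d → ℝ)) (i : Fin d) (x : EReal) : ℝ :=
  (P {ω | (X ω i : EReal) ≤ x}).toReal

/-- if `g ≤ h` are `[0,1]`-valued with
`1_{(-∞,u]} ≤ g` and `h ≤ 1_{(-∞,v]}`, then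
`‖h(X) - g(X)‖_r ≤ (∑_i (F_i(v_i) - F_i(u_i)))^(1/r)`. -/
theorem stmt8 {Ω : Type*} [MeasurableSpace Ω] {d : ℕ}
    (P : Measure Ω) [IsProbabilityMeasure P]
    (X : Ω → (Fin d → ℝ)) (hX : Measurable X)
    (u v : Fin d → EReal) (huv : ∀ i, u i ≤ v i)
    (g h : (Fin d → ℝ) → ℝ) (hgm : Measurable g) (hhm : Measurable h)
    (hg01 : ∀ x, 0 ≤ g x ∧ g x ≤ 1) (hh01 : ∀ x, 0 ≤ h x ∧ h x ≤ 1)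
    (hgh : ∀ x, g x ≤ h x)
    (hlow : ∀ x, indLE u x ≤ g x) (hupp : ∀ x, h x ≤ indLE v x)
    (r : ℝ) (hr : 1 ≤ r) :
    (∫ ω, |h (X ω) - g (X ω)| ^ r ∂P) ^ (1 / r) ≤
      (∑ i : Fin d, (margCdf P X i (v i) - margCdf P X i (u i))) ^ (1 / r) := by
  have hr0 : (0:ℝ) < r := lt_of_lt_of_le one_pos hr
  -- sets
  set A : Fin d → Set Ω := fun i => {ω | (X ω i : EReal) ≤ v i} \ {ω | (X ω i : EReal) ≤ u i} with hA
  have hmeas : ∀ (c : EReal) (i : Fin d), MeasurableSet {ω | (X ω i : EReal) ≤ c} := by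
    intro c i
    exact measurableSet_le (measurable_coe_real_ereal.comp ((measurable_pi_apply i).comp hX))
      measurable_const
  have hAmeas : ∀ i, MeasurableSet (A i) := fun i => (hmeas (v i) i).diff (hmeas (u i) i)
  -- pointwise bound of h - g by sum of indicators
  have hptw : ∀ ω, h (X ω) - g (X ω) ≤ ∑ i, (A i).indicator (1 : Ω → ℝ) ω := by
    intro ω
    have hsum0 : (0:ℝ) ≤ ∑ i, (A i).indicator (1 : Ω → ℝ) ω :=
      Finset.sum_nonneg fun i _ => Set.indicator_nonneg (fun _ _ => zero_le_one) ω
    by_cases hu : ∀ i, (X ω i : EReal) ≤ u i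
    · have : indLE u (X ω) = 1 := by
        simp [indLE, Set.indicator_of_mem, hu]
      have hg1 : (1:ℝ) ≤ g (X ω) := this ▸ hlow (X ω)
      have := (hh01 (X ω)).2
      linarith
    · push_neg at hu
      obtain ⟨i0, hi0⟩ := hu
      by_cases hv : ∀ i, (X ω i : EReal) ≤ v i
      · have hmem : ω ∈ A i0 := ⟨hv i0, not_le.mpr hi0⟩
        have h1 : (A i0).indicator (1 : Ω → ℝ) ω = 1 := Set.indicator_of_mem hmem 1
        have hle : (A i0).indicator (1 : Ω → ℝ) ω ≤ ∑ i, (A i).indicator (1 : Ω → ℝ) ω :=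
          Finset.single_le_sum (f := fun i => (A i).indicator (1 : Ω → ℝ) ω)
            (fun i _ => Set.indicator_nonneg (fun _ _ => zero_le_one) ω) (Finset.mem_univ i0)
        have := (hh01 (X ω)).2
        have := (hg01 (X ω)).1
        linarith [h1 ▸ hle]
      · have : indLE v (X ω) = 0 := by
          simp only [indLE, Set.indicator_apply, Set.mem_setOf_eq]
          rw [if_neg hv]
        have hh0 : h (X ω) ≤ 0 := this ▸ hupp (X ω)
        have := (hg01 (X ω)).1
        linarith
  -- integrability
  have hd : ∀ ω, 0 ≤ h (X ω) - g (X ω) := fun ω => sub_nonneg.2 (hgh (X ω))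
  have hd1 : ∀ ω, h (X ω) - g (X ω) ≤ 1 := fun ω => by
    have := (hh01 (X ω)).2; have := (hg01 (X ω)).1; linarith
  have hdm : Measurable fun ω => h (X ω) - g (X ω) := (hhm.comp hX).sub (hgm.comp hX)
  have hInt1 : Integrable (fun ω => h (X ω) - g (X ω)) P := by
    refine (integrable_const (1:ℝ)).mono' hdm.aestronglyMeasurable (ae_of_all _ fun ω => ?_)
    rw [Real.norm_eq_abs, abs_of_nonneg (hd ω)]; exact hd1 ω
  have hIntPow : Integrable (fun ω => |h (X ω) - g (X ω)| ^ r) P := by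
    refine (integrable_const (1:ℝ)).mono'
      ((hdm.abs.pow_const r).aestronglyMeasurable) (ae_of_all _ fun ω => ?_)
    have h0 : (0:ℝ) ≤ |h (X ω) - g (X ω)| ^ r := Real.rpow_nonneg (abs_nonneg _) r
    rw [Real.norm_eq_abs, abs_of_nonneg h0]
    calc |h (X ω) - g (X ω)| ^ r ≤ 1 ^ r := by
          apply Real.rpow_le_rpow (abs_nonneg _) _ hr0.le
          rw [abs_of_nonneg (hd ω)]; exact hd1 ω
      _ = 1 := Real.one_rpow r
  have hIntSum : Integrable (fun ω => ∑ i, (A i).indicator (1 : Ω → ℝ) ω) P := by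
    apply integrable_finset_sum
    intro i _
    exact (integrable_const (1:ℝ)).indicator (hAmeas i)
  -- step 1 : |h - g|^r ≤ h - g
  have step1 : (∫ ω, |h (X ω) - g (X ω)| ^ r ∂P) ≤ ∫ ω, (h (X ω) - g (X ω)) ∂P := by
    apply integral_mono hIntPow hInt1
    intro ω
    dsimp only
    rw [abs_of_nonneg (hd ω)]
    rcases eq_or_lt_of_le (hd ω) with h0 | h0
    · simp [← h0, Real.zero_rpow hr0.ne']
    · calc (h (X ω) - g (X ω)) ^ r ≤ (h (X ω) - g (X ω)) ^ (1:ℝ) :=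
            Real.rpow_le_rpow_of_exponent_ge h0 (hd1 ω) hr
        _ = _ := Real.rpow_one _
  -- step 2 : ∫ (h - g) ≤ ∑ P(A i)
  have step2 : (∫ ω, (h (X ω) - g (X ω)) ∂P) ≤
      ∑ i : Fin d, (margCdf P X i (v i) - margCdf P X i (u i)) := by
    calc (∫ ω, (h (X ω) - g (X ω)) ∂P)
        ≤ ∫ ω, (∑ i, (A i).indicator (1 : Ω → ℝ) ω) ∂P := integral_mono hInt1 hIntSum hptw
      _ = ∑ i, ∫ ω, (A i).indicator (1 : Ω → ℝ) ω ∂P := by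
          exact integral_finset_sum _ fun i _ => (integrable_const (1:ℝ)).indicator (hAmeas i)
      _ = ∑ i : Fin d, (margCdf P X i (v i) - margCdf P X i (u i)) := by
          apply Finset.sum_congr rfl
          intro i _
          rw [integral_indicator_one (hAmeas i)]
          have hsub : {ω | (X ω i : EReal) ≤ u i} ⊆ {ω | (X ω i : EReal) ≤ v i} :=
            fun ω hω => le_trans hω (huv i)
          rw [hA]
          rw [measureReal_def]
          rw [measure_diff hsub (hmeas (u i) i).nullMeasurableSet (measure_ne_top P _)]
          rw [ENNReal.toReal_sub_of_le (measure_mono hsub) (measure_ne_top P _)]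
          rfl
  -- conclude
  have hLHS0 : 0 ≤ ∫ ω, |h (X ω) - g (X ω)| ^ r ∂P :=
    integral_nonneg fun ω => Real.rpow_nonneg (abs_nonneg _) r
  exact Real.rpow_le_rpow hLHS0 (step1.trans step2) (by positivity)

end
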